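/- arXiv:2405.16489 — 2 statements merged into one kernel-verified Lean document; each statement's English description precedes it below -/
import Mathlib

section
/- (Theorem 2, decomposition of the negative log-likelihood objective.) Let C, S, A be discrete random variables and let q : 𝒞 → (𝒜 → ℝ) assign to each c a probability mass function q(c) on 𝒜 (q(c)(a) ≥ 0 and ∑_a q(c)(a) = 1) such that q(c)(a) > 0 whenever P(C = c ∧ A = a) > 0. Then the expected negative conditional log-likelihood decomposes as: ∑_{c,a : P(C=c ∧ A=a) > 0} P(C = c ∧ A = a) · ( − log q(c)(a) ) = ∑_{c,a : P(C=c ∧ A=a) > 0} P(C = c ∧ A = a) · log ( P(A = a ∧ C = c) / ( P(C = c) · q(c)(a) ) ) + I(S : A | C) + H(A | ⟨C, S⟩). In words: E[−log q(A | C)] = E[ log ( p(A | C) / q(A | C) ) ] + I(S : A | C) + H(A | ⟨C, S⟩), so minimizing the negative log-likelihood of the model q given the causal subgraph C is equivalent to minimizing the model-mismatch term E[log(p(A|C)/q(A|C))] plus the spurious-correlation term I(S : A | C), up to the constant H(A | ⟨C, S⟩) inherent in the data. -/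
open MeasureTheory ProbabilityTheory

/-- Shannon entropy of a discrete random variable `X` valued in a finite type. -/
noncomputable def Hent {Ω 𝒳 : Type*} [MeasurableSpace Ω] [Fintype 𝒳]
    (P : Measure Ω) (X : Ω → 𝒳) : ℝ :=
  - ∑ x : 𝒳, (P (X ⁻¹' {x})).toReal * Real.log (P (X ⁻¹' {x})).toReal

/-- Conditional entropy `H(X | Y) = H(⟨X, Y⟩) − H(Y)`. -/
noncomputable def condHent {Ω 𝒳 𝒴 : Type*} [MeasurableSpace Ω] [Fintype 𝒳] [Fintype 𝒴]
    (P : Measure Ω) (X : Ω → 𝒳) (Y : Ω → 𝒴) : ℝ :=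
  Hent P (fun ω => (X ω, Y ω)) - Hent P Y

/-- Mutual information `I(X : Y) = H(X) + H(Y) − H(⟨X, Y⟩)`. -/
noncomputable def MInfo {Ω 𝒳 𝒴 : Type*} [MeasurableSpace Ω] [Fintype 𝒳] [Fintype 𝒴]
    (P : Measure Ω) (X : Ω → 𝒳) (Y : Ω → 𝒴) : ℝ :=
  Hent P X + Hent P Y - Hent P (fun ω => (X ω, Y ω))

/-- Conditional mutual information `I(X : Y | Z) = H(X|Z) + H(Y|Z) − H(⟨X,Y⟩|Z)`. -/
noncomputable def condMInfo {Ω 𝒳 𝒴 𝒵 : Type*} [MeasurableSpace Ω]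
    [Fintype 𝒳] [Fintype 𝒴] [Fintype 𝒵]
    (P : Measure Ω) (X : Ω → 𝒳) (Y : Ω → 𝒴) (Z : Ω → 𝒵) : ℝ :=
  condHent P X Z + condHent P Y Z - condHent P (fun ω => (X ω, Y ω)) Z

/-- Entropy is invariant under composing with an equivalence. -/
lemma Hent_comp_equiv {Ω 𝒳 𝒴 : Type*} [MeasurableSpace Ω] [Fintype 𝒳] [Fintype 𝒴]
    (P : Measure Ω) (X : Ω → 𝒳) (e : 𝒳 ≃ 𝒴) :
    Hent P (fun ω => e (X ω)) = Hent P X := by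
  unfold Hent
  congr 1
  refine Fintype.sum_equiv e.symm _ _ (fun y => ?_)
  have : (fun ω => e (X ω)) ⁻¹' {y} = X ⁻¹' {e.symm y} := by
    ext ω; simp [Equiv.eq_symm_apply]
  rw [this]

/-- Decompose a measure over the fibers of a discrete random variable. -/
lemma measure_fiber_sum {Ω 𝒜 : Type*} [MeasurableSpace Ω]
    [Fintype 𝒜] [MeasurableSpace 𝒜] [DiscreteMeasurableSpace 𝒜]
    (P : Measure Ω) [IsProbabilityMeasure P]
    (A : Ω → 𝒜) (hA : Measurable A) (t : Set Ω) (ht : MeasurableSet t) :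
    (P t).toReal = ∑ a : 𝒜, (P (t ∩ A ⁻¹' {a})).toReal := by
  have h1 : t = ⋃ a : 𝒜, t ∩ A ⁻¹' {a} := by
    ext ω; simp
  have hdisj : Pairwise (Function.onFun Disjoint (fun a : 𝒜 => t ∩ A ⁻¹' {a})) := by
    intro a b hab
    refine Set.disjoint_left.mpr (fun ω hωa hωb => hab ?_)
    have ha : A ω = a := hωa.2
    have hb : A ω = b := hωb.2
    rw [← ha, hb]
  have hmeas : ∀ a : 𝒜, MeasurableSet (t ∩ A ⁻¹' {a}) :=
    fun a => ht.inter (hA (MeasurableSet.singleton a))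
  have h2 : P t = ∑ a : 𝒜, P (t ∩ A ⁻¹' {a}) := by
    conv_lhs => rw [h1]
    rw [measure_iUnion hdisj hmeas, tsum_fintype]
  rw [h2, ENNReal.toReal_sum]
  intro a _
  exact (measure_lt_top P _).ne

theorem stmt8_aux {Ω 𝒞 𝒮 𝒜 : Type*} [MeasurableSpace Ω]
    [Fintype 𝒞] [MeasurableSpace 𝒞]
    [Fintype 𝒮] [MeasurableSpace 𝒮]
    [Fintype 𝒜] [MeasurableSpace 𝒜]
    (P : Measure Ω)
    (C : Ω → 𝒞) (S : Ω → 𝒮) (A : Ω → 𝒜) :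
    condMInfo P S A C + condHent P A (fun ω => (C ω, S ω)) =
      Hent P (fun ω => (A ω, C ω)) - Hent P C := by
  have e1 : Hent P (fun ω => (S ω, C ω)) = Hent P (fun ω => (C ω, S ω)) := by
    simpa using (Hent_comp_equiv P (fun ω => (S ω, C ω)) (Equiv.prodComm 𝒮 𝒞)).symm
  have e2 : Hent P (fun ω => ((S ω, A ω), C ω))
      = Hent P (fun ω => (A ω, (C ω, S ω))) := by
    have := Hent_comp_equiv P (fun ω => (A ω, (C ω, S ω)))
      (⟨fun x => ((x.2.2, x.1), x.2.1), fun y => (y.1.2, (y.2, y.1.1)),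
        fun x => rfl, fun y => rfl⟩ : 𝒜 × (𝒞 × 𝒮) ≃ (𝒮 × 𝒜) × 𝒞)
    simpa using this
  unfold condMInfo condHent
  rw [e1, e2]
  ring

open scoped Classical in
/-- Theorem 2: decomposition of the expected negative conditional
log-likelihood:
`E[−log q(A | C)] = E[log(p(A|C)/q(A|C))] + I(S : A | C) + H(A | ⟨C,S⟩)`. -/
theorem stmt8 {Ω 𝒞 𝒮 𝒜 : Type*} [MeasurableSpace Ω]
    [Fintype 𝒞] [Nonempty 𝒞] [MeasurableSpace 𝒞] [DiscreteMeasurableSpace 𝒞]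
    [Fintype 𝒮] [Nonempty 𝒮] [MeasurableSpace 𝒮] [DiscreteMeasurableSpace 𝒮]
    [Fintype 𝒜] [Nonempty 𝒜] [MeasurableSpace 𝒜] [DiscreteMeasurableSpace 𝒜]
    (P : Measure Ω) [IsProbabilityMeasure P]
    (C : Ω → 𝒞) (S : Ω → 𝒮) (A : Ω → 𝒜)
    (hC : Measurable C) (hS : Measurable S) (hA : Measurable A)
    (q : 𝒞 → 𝒜 → ℝ)
    (hq_nonneg : ∀ c a, 0 ≤ q c a)
    (hq_sum : ∀ c, ∑ a : 𝒜, q c a = 1)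
    (hq_pos : ∀ c a, P (C ⁻¹' {c} ∩ A ⁻¹' {a}) ≠ 0 → 0 < q c a) :
    (∑ c : 𝒞, ∑ a : 𝒜,
        if P (C ⁻¹' {c} ∩ A ⁻¹' {a}) ≠ 0 then
          (P (C ⁻¹' {c} ∩ A ⁻¹' {a})).toReal * (- Real.log (q c a))
        else 0) =
      (∑ c : 𝒞, ∑ a : 𝒜,
        if P (C ⁻¹' {c} ∩ A ⁻¹' {a}) ≠ 0 then
          (P (C ⁻¹' {c} ∩ A ⁻¹' {a})).toReal *
            Real.log ((P (A ⁻¹' {a} ∩ C ⁻¹' {c})).toReal /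
              ((P (C ⁻¹' {c})).toReal * q c a))
        else 0)
      + condMInfo P S A C + condHent P A (fun ω => (C ω, S ω)) := by
  rw [add_assoc, stmt8_aux]
  set p2 : 𝒞 → 𝒜 → ℝ := fun c a => (P (C ⁻¹' {c} ∩ A ⁻¹' {a})).toReal with hp2
  set Pc : 𝒞 → ℝ := fun c => (P (C ⁻¹' {c})).toReal with hPc
  have hle : ∀ c a, p2 c a ≤ Pc c := by
    intro c a
    exact ENNReal.toReal_mono (measure_lt_top P _).ne
      (measure_mono (Set.inter_subset_left))
  have key : ∀ c a,
      (if P (C ⁻¹' {c} ∩ A ⁻¹' {a}) ≠ 0 then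
          p2 c a * (- Real.log (q c a)) else 0) =
      (if P (C ⁻¹' {c} ∩ A ⁻¹' {a}) ≠ 0 then
          p2 c a * Real.log ((P (A ⁻¹' {a} ∩ C ⁻¹' {c})).toReal /
            (Pc c * q c a)) else 0)
      + (-(p2 c a * Real.log (p2 c a)) + p2 c a * Real.log (Pc c)) := by
    intro c a
    have hAC : (P (A ⁻¹' {a} ∩ C ⁻¹' {c})).toReal = p2 c a := by
      show _ = (P (C ⁻¹' {c} ∩ A ⁻¹' {a})).toReal
      rw [Set.inter_comm]
    by_cases h : P (C ⁻¹' {c} ∩ A ⁻¹' {a}) ≠ 0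
    · rw [if_pos h, if_pos h, hAC]
      have h2pos : 0 < p2 c a := ENNReal.toReal_pos h (measure_lt_top P _).ne
      have hPcpos : 0 < Pc c := lt_of_lt_of_le h2pos (hle c a)
      have hqpos : 0 < q c a := hq_pos c a h
      rw [Real.log_div h2pos.ne' (mul_pos hPcpos hqpos).ne',
        Real.log_mul hPcpos.ne' hqpos.ne']
      ring
    · rw [if_neg h, if_neg h]
      have h0 : p2 c a = 0 := by
        show (P (C ⁻¹' {c} ∩ A ⁻¹' {a})).toReal = 0
        rw [not_not.mp h]; simp
      rw [h0]; ring
  have hHAC : (∑ c : 𝒞, ∑ a : 𝒜, -(p2 c a * Real.log (p2 c a)))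
      = Hent P (fun ω => (A ω, C ω)) := by
    unfold Hent
    rw [Fintype.sum_prod_type, Finset.sum_comm, ← Finset.sum_neg_distrib]
    refine Finset.sum_congr rfl (fun a _ => ?_)
    rw [← Finset.sum_neg_distrib]
    refine Finset.sum_congr rfl (fun c _ => ?_)
    have hpre : (fun ω => (A ω, C ω)) ⁻¹' {(a, c)} = C ⁻¹' {c} ∩ A ⁻¹' {a} := by
      ext ω
      simp [Prod.ext_iff, and_comm]
    rw [hpre]
  have hHC : (∑ c : 𝒞, ∑ a : 𝒜, p2 c a * Real.log (Pc c))
      = - Hent P C := by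
    unfold Hent
    rw [neg_neg]
    refine Finset.sum_congr rfl (fun c _ => ?_)
    rw [← Finset.sum_mul]
    congr 1
    exact (measure_fiber_sum P A hA (C ⁻¹' {c})
      (hC (MeasurableSet.singleton c))).symm
  have hsum : (∑ c : 𝒞, ∑ a : 𝒜,
        if P (C ⁻¹' {c} ∩ A ⁻¹' {a}) ≠ 0 then
          p2 c a * (- Real.log (q c a)) else 0)
      = (∑ c : 𝒞, ∑ a : 𝒜,
        if P (C ⁻¹' {c} ∩ A ⁻¹' {a}) ≠ 0 then
          p2 c a * Real.log ((P (A ⁻¹' {a} ∩ C ⁻¹' {c})).toReal /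
            (Pc c * q c a)) else 0)
        + ∑ c : 𝒞, ∑ a : 𝒜,
            (-(p2 c a * Real.log (p2 c a)) + p2 c a * Real.log (Pc c)) := by
    rw [← Finset.sum_add_distrib]
    refine Finset.sum_congr rfl (fun c _ => ?_)
    rw [← Finset.sum_add_distrib]
    exact Finset.sum_congr rfl (fun a _ => key c a)
  rw [hsum]
  congr 1
  simp only [Finset.sum_add_distrib]
  rw [hHAC, hHC]
  ring
end

section
/- Functional representation lemma (finite case, as invoked in the proof of Theorem 1): for any discrete random variables X₁ (valued in a finite type 𝒳₁) and X₂ (valued in a finite type 𝒳₂) on a probability space, there exist a probability space (Ω′, ℱ′, P′), a finite type 𝒯, random variables Y₁ : Ω′ → 𝒳₁ and Y₃ : Ω′ → 𝒯 with Y₁ and Y₃ independent, and a function γ : 𝒳₁ × 𝒯 → 𝒳₂, such that the pair ⟨Y₁, γ(Y₁, Y₃)⟩ has the same joint distribution as ⟨X₁, X₂⟩. -/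
open MeasureTheory ProbabilityTheory
open scoped ENNReal

/-- Functional representation lemma (finite case): for discrete random
variables `X₁, X₂` there exist a probability space, a finite type `𝒯`, independent
random variables `Y₁, Y₃` and a function `γ` such that `⟨Y₁, γ(Y₁, Y₃)⟩` has the same
joint distribution as `⟨X₁, X₂⟩`. -/
theorem stmt9 {Ω 𝒳₁ 𝒳₂ : Type*} [MeasurableSpace Ω]
    [Fintype 𝒳₁] [Nonempty 𝒳₁] [MeasurableSpace 𝒳₁] [DiscreteMeasurableSpace 𝒳₁]
    [Fintype 𝒳₂] [Nonempty 𝒳₂] [MeasurableSpace 𝒳₂] [DiscreteMeasurableSpace 𝒳₂]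
    (P : Measure Ω) [IsProbabilityMeasure P]
    (X₁ : Ω → 𝒳₁) (X₂ : Ω → 𝒳₂)
    (hX₁ : Measurable X₁) (hX₂ : Measurable X₂) :
    ∃ (Ω' : Type) (_ : MeasurableSpace Ω') (P' : Measure Ω') (_ : IsProbabilityMeasure P')
      (𝒯 : Type) (_ : Fintype 𝒯) (_ : Nonempty 𝒯)
      (Y₁ : Ω' → 𝒳₁) (Y₃ : Ω' → 𝒯) (γ : 𝒳₁ × 𝒯 → 𝒳₂),
      (∀ (x : 𝒳₁) (t : 𝒯),
        P' (Y₁ ⁻¹' {x} ∩ Y₃ ⁻¹' {t}) = P' (Y₁ ⁻¹' {x}) * P' (Y₃ ⁻¹' {t})) ∧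
      (∀ (x₁ : 𝒳₁) (x₂ : 𝒳₂),
        P' ((fun ω => (Y₁ ω, γ (Y₁ ω, Y₃ ω))) ⁻¹' {(x₁, x₂)}) =
          P ((fun ω => (X₁ ω, X₂ ω)) ⁻¹' {(x₁, x₂)})) := by
  classical
  obtain ⟨y0⟩ := ‹Nonempty 𝒳₂›
  set n₁ := Fintype.card 𝒳₁ with hn₁
  set n₂ := Fintype.card 𝒳₂ with hn₂
  set e₁ := Fintype.equivFin 𝒳₁ with he₁
  set e₂ := Fintype.equivFin 𝒳₂ with he₂
  -- joint distribution transported to Fin types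
  set jp : Fin n₁ → Fin n₂ → ℝ≥0∞ :=
    fun i j => P ((fun ω => (X₁ ω, X₂ ω)) ⁻¹' {(e₁.symm i, e₂.symm j)}) with hjp
  set q : Fin n₁ → ℝ≥0∞ := fun i => ∑ j, jp i j with hq
  have hmeas : ∀ i j, MeasurableSet ((fun ω => (X₁ ω, X₂ ω)) ⁻¹' {(e₁.symm i, e₂.symm j)}) := by
    intro i j
    have : (fun ω => (X₁ ω, X₂ ω)) ⁻¹' {(e₁.symm i, e₂.symm j)} =
        X₁ ⁻¹' {e₁.symm i} ∩ X₂ ⁻¹' {e₂.symm j} := by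
      ext ω; simp [Prod.ext_iff]
    rw [this]
    exact (hX₁ (MeasurableSet.singleton _)).inter (hX₂ (MeasurableSet.singleton _))
  -- total mass one
  have hsum : ∑ i, q i = 1 := by
    have key : ∑ z : Fin n₁ × Fin n₂,
        P ((fun ω => (e₁ (X₁ ω), e₂ (X₂ ω))) ⁻¹' {z}) = 1 := by
      rw [MeasureTheory.sum_measure_preimage_singleton Finset.univ
        (by intro z _
            have : ((fun ω => (e₁ (X₁ ω), e₂ (X₂ ω))) ⁻¹' {z}) =
                (fun ω => (X₁ ω, X₂ ω)) ⁻¹' {(e₁.symm z.1, e₂.symm z.2)} := by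
              ext ω; simp [Prod.ext_iff, Equiv.eq_symm_apply, eq_comm]
            rw [this]; exact hmeas z.1 z.2)]
      simp
    have : ∑ z : Fin n₁ × Fin n₂,
        P ((fun ω => (e₁ (X₁ ω), e₂ (X₂ ω))) ⁻¹' {z}) = ∑ i, q i := by
      rw [Fintype.sum_prod_type]
      refine Finset.sum_congr rfl fun i _ => Finset.sum_congr rfl fun j _ => ?_
      congr 1
      ext ω; simp [Prod.ext_iff, Equiv.eq_symm_apply, eq_comm, hjp]
    rw [← this, key]
  have hq_le : ∀ i, q i ≤ 1 := by
    intro i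
    rw [← hsum]
    exact Finset.single_le_sum (fun _ _ => zero_le) (Finset.mem_univ i)
  have hq_ne_top : ∀ i, q i ≠ ⊤ := fun i => ne_top_of_le_ne_top ENNReal.one_ne_top (hq_le i)
  have hjp_le : ∀ i j, jp i j ≤ q i := fun i j =>
    Finset.single_le_sum (fun _ _ => zero_le) (Finset.mem_univ j)
  -- conditional kernel
  set r : Fin n₁ → Fin n₂ → ℝ≥0∞ :=
    fun i j => if q i = 0 then (if j = e₂ y0 then 1 else 0) else jp i j / q i with hr
  have hr_sum : ∀ i, ∑ j, r i j = 1 := by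
    intro i
    by_cases h0 : q i = 0
    · simp [hr, h0]
    · simp only [hr, if_neg h0]
      simp only [div_eq_mul_inv]
      rw [← Finset.sum_mul]
      exact ENNReal.mul_inv_cancel h0 (hq_ne_top i)
  -- the weight function and PMF
  set p : (Fin n₁ × (Fin n₁ → Fin n₂)) → ℝ≥0∞ :=
    fun z => q z.1 * ∏ i, r i (z.2 i) with hp
  have hfw : ∀ t : Fin n₁ → Fin n₂,
      (∑ x : Fin n₁, p (x, t)) = ∏ i, r i (t i) := by
    intro t
    simp only [hp]
    rw [← Finset.sum_mul, hsum, one_mul]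
  have hfsum : ∀ x : Fin n₁, (∑ t : Fin n₁ → Fin n₂, ∏ i, r i (t i)) = 1 := by
    intro x
    rw [← Fintype.piFinset_univ, ← Finset.prod_univ_sum (fun _ => Finset.univ) r]
    simp [hr_sum]
  have hptotal : ∑ z : Fin n₁ × (Fin n₁ → Fin n₂), p z = 1 := by
    rw [Fintype.sum_prod_type]
    have : ∀ x : Fin n₁, (∑ t : Fin n₁ → Fin n₂, p (x, t)) = q x := by
      intro x
      simp only [hp]
      rw [← Finset.mul_sum, hfsum x, mul_one]
    simp only [this, hsum]
  set pmf : PMF (Fin n₁ × (Fin n₁ → Fin n₂)) := PMF.ofFintype p hptotal with hpmf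
  refine ⟨Fin n₁ × (Fin n₁ → Fin n₂), inferInstance, pmf.toMeasure, PMF.toMeasure.isProbabilityMeasure pmf,
    Fin n₁ → Fin n₂, inferInstance, inferInstance,
    fun z => e₁.symm z.1, Prod.snd, fun at' => e₂.symm (at'.2 (e₁ at'.1)), ?_, ?_⟩
  · -- independence
    intro x t
    have hset : ((fun z : Fin n₁ × (Fin n₁ → Fin n₂) => e₁.symm z.1) ⁻¹' {x}) ∩
        (Prod.snd ⁻¹' {t}) = {(e₁ x, t)} := by
      ext z
      simp [Prod.ext_iff, Equiv.symm_apply_eq]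
    have hset1 : ((fun z : Fin n₁ × (Fin n₁ → Fin n₂) => e₁.symm z.1) ⁻¹' {x}) =
        (Prod.fst ⁻¹' {e₁ x}) := by
      ext z; simp [Equiv.symm_apply_eq]
    have h1 : pmf.toMeasure (Prod.fst ⁻¹' {e₁ x} : Set (Fin n₁ × (Fin n₁ → Fin n₂))) = q (e₁ x) := by
      rw [PMF.toMeasure_apply_fintype, Fintype.sum_prod_type]
      have : ∀ a : Fin n₁, ∀ f : Fin n₁ → Fin n₂,
          (Prod.fst ⁻¹' {e₁ x} : Set (Fin n₁ × (Fin n₁ → Fin n₂))).indicator (⇑pmf) (a, f) =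
          if a = e₁ x then p (a, f) else 0 := by
        intro a f
        by_cases h : a = e₁ x <;> simp [Set.indicator, h, hpmf]
      simp only [this]
      rw [Finset.sum_comm]
      simp only [Finset.sum_ite_eq', Finset.mem_univ, if_true]
      simp only [hp]
      rw [← Finset.mul_sum, hfsum (e₁ x), mul_one]
    have h2 : pmf.toMeasure (Prod.snd ⁻¹' {t} : Set (Fin n₁ × (Fin n₁ → Fin n₂))) =
        ∏ i, r i (t i) := by
      rw [PMF.toMeasure_apply_fintype, Fintype.sum_prod_type]
      have : ∀ a : Fin n₁, ∀ f : Fin n₁ → Fin n₂,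
          (Prod.snd ⁻¹' {t} : Set (Fin n₁ × (Fin n₁ → Fin n₂))).indicator (⇑pmf) (a, f) =
          if f = t then p (a, f) else 0 := by
        intro a f
        by_cases h : f = t <;> simp [Set.indicator, h, hpmf]
      simp only [this]
      simp only [Finset.sum_ite_eq', Finset.mem_univ, if_true]
      exact hfw t
    rw [hset, hset1, h1, h2, PMF.toMeasure_apply_singleton _ _ (MeasurableSet.singleton _)]
    simp [hpmf, hp]
  · -- joint distribution
    intro x₁ x₂
    have hset : ((fun z : Fin n₁ × (Fin n₁ → Fin n₂) =>
        (e₁.symm z.1, e₂.symm (z.2 (e₁ (e₁.symm z.1))))) ⁻¹' {(x₁, x₂)}) =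
        {z : Fin n₁ × (Fin n₁ → Fin n₂) | z.1 = e₁ x₁ ∧ z.2 (e₁ x₁) = e₂ x₂} := by
      ext z
      simp only [Set.mem_preimage, Set.mem_singleton_iff, Prod.ext_iff, Set.mem_setOf_eq,
        Equiv.symm_apply_eq, Equiv.apply_symm_apply]
      constructor
      · rintro ⟨h1, h2⟩; exact ⟨h1, by rwa [← h1]⟩
      · rintro ⟨h1, h2⟩; exact ⟨h1, by rwa [h1]⟩
    set i₁ := e₁ x₁ with hi₁
    set j₂ := e₂ x₂ with hj₂
    have key : pmf.toMeasure
        {z : Fin n₁ × (Fin n₁ → Fin n₂) | z.1 = i₁ ∧ z.2 i₁ = j₂} = jp i₁ j₂ := by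
      rw [PMF.toMeasure_apply_fintype, Fintype.sum_prod_type]
      have hind : ∀ a : Fin n₁, ∀ f : Fin n₁ → Fin n₂,
          ({z : Fin n₁ × (Fin n₁ → Fin n₂) | z.1 = i₁ ∧ z.2 i₁ = j₂} : Set _).indicator
            (⇑pmf) (a, f) =
          if a = i₁ then (if f i₁ = j₂ then p (a, f) else 0) else 0 := by
        intro a f
        by_cases h : a = i₁
        · by_cases h' : f i₁ = j₂ <;> simp [Set.indicator, h, h', hpmf]
        · simp [Set.indicator, h]
      simp only [hind]
      rw [Finset.sum_comm]
      simp only [Finset.sum_ite_eq', Finset.mem_univ, if_true]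
      -- now ∑ f, if f i₁ = j₂ then p (i₁, f) else 0 = jp i₁ j₂
      set r' : Fin n₁ → Fin n₂ → ℝ≥0∞ :=
        fun i j => if i = i₁ then (if j = j₂ then r i j else 0) else r i j with hr'
      have hswap : ∀ f : Fin n₁ → Fin n₂,
          (if f i₁ = j₂ then p (i₁, f) else 0) = q i₁ * ∏ i, r' i (f i) := by
        intro f
        by_cases h : f i₁ = j₂
        · rw [if_pos h]
          simp only [hp]
          congr 1
          refine Finset.prod_congr rfl fun i _ => ?_
          by_cases hi : i = i₁
          · subst hi; simp [hr', h]
          · simp [hr', hi]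
        · rw [if_neg h]
          have : ∏ i, r' i (f i) = 0 :=
            Finset.prod_eq_zero (Finset.mem_univ i₁) (by simp [hr', h])
          rw [this, mul_zero]
      rw [Finset.sum_congr rfl fun f _ => hswap f]
      rw [← Finset.mul_sum]
      have hsum' : (∑ f : Fin n₁ → Fin n₂, ∏ i, r' i (f i)) = r i₁ j₂ := by
        rw [← Fintype.piFinset_univ, ← Finset.prod_univ_sum (fun _ => Finset.univ) r']
        have : ∀ i : Fin n₁, (∑ j, r' i j) = if i = i₁ then r i₁ j₂ else 1 := by
          intro i
          by_cases hi : i = i₁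
          · subst hi; simp [hr', Finset.sum_ite_eq', Finset.mem_univ]
          · simp [hr', hi, hr_sum i]
        simp only [this]
        rw [Finset.prod_ite_eq', if_pos (Finset.mem_univ i₁)]
      rw [hsum']
      -- q i₁ * r i₁ j₂ = jp i₁ j₂
      by_cases h0 : q i₁ = 0
      · have : jp i₁ j₂ = 0 := le_antisymm (h0 ▸ hjp_le i₁ j₂) (zero_le)
        simp [h0, this]
      · simp only [hr, if_neg h0]
        rw [ENNReal.mul_div_cancel h0 (hq_ne_top i₁)]
    rw [hset, key]
    simp [hjp, hi₁, hj₂]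
end
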